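/- Let T be a triangulation of a convex m-gon and V ⊆ [m] with |V| ≥ 4. Then the restriction of χ_T to 4-tuples from V equals χ_{T_V}, the chirotope of the restricted triangulation T_V. -/

import Mathlib

namespace CyclicTri

variable {m : ℕ}

/-- Position of `v` relative to base point `a` in the cyclic order on `ZMod m`. -/
def pos (a v : ZMod m) : ℕ := (v - a).val

/-- `a ≺ b ≺ c` in the cyclic order. -/
def Cyc3 (a b c : ZMod m) : Prop := 0 < pos a b ∧ pos a b < pos a c

/-- `a ≺ b ≺ c ≺ d` in the cyclic order. -/
def Cyc4 (a b c d : ZMod m) : Prop :=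
  0 < pos a b ∧ pos a b < pos a c ∧ pos a c < pos a d

/-- The arcs `xy` and `x'y'` cross: their endpoints interleave cyclically. -/
def Cross (x y x' y' : ZMod m) : Prop := Cyc4 x x' y y' ∨ Cyc4 x' x y' y

/-- `xy` is a diagonal of the polygon: the endpoints are distinct and non-adjacent. -/
def Diag (x y : ZMod m) : Prop := x ≠ y ∧ y ≠ x + 1 ∧ x ≠ y + 1

/-- `A` is (the symmetrised set of arcs of) a triangulation of the convex `m`-gon:
a maximal set of pairwise non-crossing diagonals. -/
def IsTriangulation (A : Set (ZMod m × ZMod m)) : Prop :=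
  (∀ x y, (x, y) ∈ A → (y, x) ∈ A) ∧
  (∀ x y, (x, y) ∈ A → Diag x y) ∧
  (∀ x y x' y', (x, y) ∈ A → (x', y') ∈ A → ¬ Cross x y x' y') ∧
  (∀ x y, Diag x y → (∀ x' y', (x', y') ∈ A → ¬ Cross x y x' y') → (x, y) ∈ A)

/-- There is an arc `xy` of `A` with `a ≺ b ≼ x ≺ c ≺ d ≼ y` (the `+1` case of `χ_T`). -/
def PosCase (A : Set (ZMod m × ZMod m)) (a b c d : ZMod m) : Prop :=
  ∃ x y, (x, y) ∈ A ∧ 0 < pos a b ∧ pos a b ≤ pos a x ∧ pos a x < pos a c ∧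
    pos a c < pos a d ∧ pos a d ≤ pos a y

/-- There is an arc `xy` of `A` with `a ≼ x ≺ b ≺ c ≼ y ≺ d` (the `-1` case of `χ_T`). -/
def NegCase (A : Set (ZMod m × ZMod m)) (a b c d : ZMod m) : Prop :=
  ∃ x y, (x, y) ∈ A ∧ pos a x < pos a b ∧ pos a b < pos a c ∧ pos a c ≤ pos a y ∧
    pos a y < pos a d

open Classical in
/-- The chirotope `χ_T` on cyclically ordered tuples `a ≺ b ≺ c ≺ d`. -/
noncomputable def chiCyc (A : Set (ZMod m × ZMod m)) (a b c d : ZMod m) : ℤ :=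
  if PosCase A a b c d then 1 else if NegCase A a b c d then -1 else 0

end CyclicTri
namespace CyclicTri
variable {m : ℕ}

/-- `xy` is a diagonal of the convex polygon with vertex set `V`:
both endpoints are in `V`, and `V` has vertices strictly between them on both sides. -/
def DiagIn (V : Finset (ZMod m)) (x y : ZMod m) : Prop :=
  x ∈ V ∧ y ∈ V ∧ x ≠ y ∧ (∃ v ∈ V, Cyc3 x v y) ∧ (∃ v ∈ V, Cyc3 y v x)

/-- `A` is a triangulation of the convex polygon with vertex set `V`:
a maximal set of pairwise non-crossing diagonals of `V`. -/
def IsTriangulationOn (V : Finset (ZMod m)) (A : Set (ZMod m × ZMod m)) : Prop :=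
  (∀ x y, (x, y) ∈ A → (y, x) ∈ A) ∧
  (∀ x y, (x, y) ∈ A → DiagIn V x y) ∧
  (∀ x y x' y', (x, y) ∈ A → (x', y') ∈ A → ¬ Cross x y x' y') ∧
  (∀ x y, DiagIn V x y → (∀ x' y', (x', y') ∈ A → ¬ Cross x y x' y') → (x, y) ∈ A)

/-- The part `V_x` of `V` lying in the cyclic half-open segment `(y, x]`. -/
def seg (V : Finset (ZMod m)) (x y : ZMod m) : Finset (ZMod m) :=
  V.filter (fun v => 0 < pos y v ∧ pos y v ≤ pos y x)

/-- The arc `xy` separates `V`: both parts `V_x = V ∩ (y,x]` and `V_y = V ∩ (x,y]`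
are nonempty. -/
def Separates (V : Finset (ZMod m)) (x y : ZMod m) : Prop :=
  (seg V x y).Nonempty ∧ (seg V y x).Nonempty

/-- The restricted set of arcs `T_V = { x^V y^V : xy an arc of T separating V }`,
where `x^V ∈ V_x` is cyclically closest to `x` and `y^V ∈ V_y` is cyclically
closest to `y`. -/
def restrictArcs (V : Finset (ZMod m)) (A : Set (ZMod m × ZMod m)) :
    Set (ZMod m × ZMod m) :=
  { p | ∃ x y, (x, y) ∈ A ∧ Separates V x y ∧
      p.1 ∈ seg V x y ∧ (∀ w ∈ seg V x y, pos y w ≤ pos y p.1) ∧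
      p.2 ∈ seg V y x ∧ (∀ w ∈ seg V y x, pos x w ≤ pos x p.2) }

end CyclicTri


namespace CyclicTri

variable {m : ℕ} [NeZero m]

lemma val_sub' (s t : ZMod m) :
    (s - t).val = if t.val ≤ s.val then s.val - t.val else s.val + m - t.val := by
  have hs := ZMod.val_lt s
  have ht := ZMod.val_lt t
  rcases eq_or_ne t 0 with rfl | h
  · simp
  · rw [sub_eq_add_neg, ZMod.val_add, ZMod.neg_val, if_neg h]
    split_ifs with hle
    · have he : s.val + (m - t.val) = s.val - t.val + m := by omega
      rw [he, Nat.add_mod_right, Nat.mod_eq_of_lt (by omega)]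
    · rw [Nat.mod_eq_of_lt (by omega)]
      omega

lemma pos_eq (a x v : ZMod m) :
    pos x v = if pos a x ≤ pos a v then pos a v - pos a x else pos a v + m - pos a x := by
  simp only [pos]
  rw [show v - x = (v - a) - (x - a) from by ring, val_sub']
  exact if_congr Iff.rfl rfl rfl

lemma pos_lt (x v : ZMod m) : pos x v < m := ZMod.val_lt _

lemma mem_seg {V : Finset (ZMod m)} {x y v : ZMod m} :
    v ∈ seg V x y ↔ v ∈ V ∧ 0 < pos y v ∧ pos y v ≤ pos y x := by
  simp [seg, Finset.mem_filter]

lemma cyc_step (u v w t : ZMod m)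
    (h1 : 0 < pos u v) (h2 : pos u v ≤ pos u w)
    (h3 : 0 < pos v t) (h4 : pos v t ≤ pos v w) :
    0 < pos u t ∧ pos u v < pos u t ∧ pos u t ≤ pos u w := by
  have b1 := pos_lt u t
  have b2 := pos_lt u v
  have b3 := pos_lt u w
  rw [pos_eq u v t] at h3
  rw [pos_eq u v t, pos_eq u v w] at h4
  split_ifs at h3 h4 <;> omega

section Main

variable {A : Set (ZMod m × ZMod m)} {V : Finset (ZMod m)} {a b c d : ZMod m}

lemma posCase_restrict (hb : b ∈ V) (hd : d ∈ V)
    (h : PosCase A a b c d) : PosCase (restrictArcs V A) a b c d := by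
  obtain ⟨x, y, hxy, h0, h1, h2, h3, h4⟩ := h
  have bX := pos_lt a x; have bY := pos_lt a y
  have bB := pos_lt a b; have bC := pos_lt a c; have bD := pos_lt a d
  have hbm : b ∈ seg V x y := by
    rw [mem_seg, pos_eq a y b, pos_eq a y x]
    exact ⟨hb, by split_ifs <;> omega⟩
  have hdm : d ∈ seg V y x := by
    rw [mem_seg, pos_eq a x d, pos_eq a x y]
    exact ⟨hd, by split_ifs <;> omega⟩
  obtain ⟨x', hx'm, hx'max⟩ := Finset.exists_max_image (seg V x y) (pos y) ⟨b, hbm⟩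
  obtain ⟨y', hy'm, hy'max⟩ := Finset.exists_max_image (seg V y x) (pos x) ⟨d, hdm⟩
  have bX' := pos_lt a x'; have bY' := pos_lt a y'
  have key1 : pos a b ≤ pos a x' ∧ pos a x' ≤ pos a x := by
    have hbx := hx'max b hbm
    have hmm := (mem_seg.mp hx'm).2
    rw [pos_eq a y b, pos_eq a y x'] at hbx
    rw [pos_eq a y x', pos_eq a y x] at hmm
    split_ifs at hbx hmm <;> omega
  have key2 : pos a d ≤ pos a y' := by
    have hdy := hy'max d hdm
    have hmm := (mem_seg.mp hy'm).2
    rw [pos_eq a x d, pos_eq a x y'] at hdy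
    rw [pos_eq a x y', pos_eq a x y] at hmm
    split_ifs at hdy hmm <;> omega
  exact ⟨x', y', ⟨x, y, hxy, ⟨⟨b, hbm⟩, ⟨d, hdm⟩⟩, hx'm, hx'max, hy'm, hy'max⟩,
    h0, key1.1, lt_of_le_of_lt key1.2 h2, h3, key2⟩

lemma posCase_of_restrict (ha : a ∈ V) (hc : c ∈ V)
    (h : PosCase (restrictArcs V A) a b c d) : PosCase A a b c d := by
  obtain ⟨x', y', hmem, h0, h1, h2, h3, h4⟩ := h
  obtain ⟨x, y, hxy, hsep, hx'm, hx'max, hy'm, hy'max⟩ := hmem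
  dsimp only at hx'm hx'max hy'm hy'max
  have bX := pos_lt a x; have bY := pos_lt a y
  have bX' := pos_lt a x'; have bY' := pos_lt a y'
  have bB := pos_lt a b; have bC := pos_lt a c; have bD := pos_lt a d
  have hpa : pos a a = 0 := by simp [pos]
  have hx's := (mem_seg.mp hx'm).2
  have hy's := (mem_seg.mp hy'm).2
  have claim1 : pos a x' ≤ pos a x ∧ pos a x < pos a c := by
    by_contra hcon
    have hcx : 0 < pos x' c ∧ pos x' c ≤ pos x' x := by
      rw [pos_eq a x' c, pos_eq a x' x]
      split_ifs <;> omega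
    have hstep := cyc_step y x' x c hx's.1 hx's.2 hcx.1 hcx.2
    have := hx'max c (mem_seg.mpr ⟨hc, hstep.1, hstep.2.2⟩)
    omega
  have claim2 : pos a y' ≤ pos a y := by
    by_contra hcon
    have haa : 0 < pos y' a ∧ pos y' a ≤ pos y' y := by
      rw [pos_eq a y' a, pos_eq a y' y]
      split_ifs <;> omega
    have hstep := cyc_step x y' y a hy's.1 hy's.2 haa.1 haa.2
    have := hy'max a (mem_seg.mpr ⟨ha, hstep.1, hstep.2.2⟩)
    omega
  exact ⟨x, y, hxy, h0, le_trans h1 claim1.1, claim1.2, h3, le_trans h4 claim2⟩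

lemma negCase_restrict (ha : a ∈ V) (hc : c ∈ V) (hcyc : Cyc4 a b c d)
    (h : NegCase A a b c d) : NegCase (restrictArcs V A) a b c d := by
  obtain ⟨x, y, hxy, n1, n2, n3, n4⟩ := h
  obtain ⟨c1, c2, c3⟩ := hcyc
  have bX := pos_lt a x; have bY := pos_lt a y
  have bB := pos_lt a b; have bC := pos_lt a c; have bD := pos_lt a d
  have hpa : pos a a = 0 := by simp [pos]
  have ham : a ∈ seg V x y := by
    rw [mem_seg, pos_eq a y a, pos_eq a y x]
    exact ⟨ha, by split_ifs <;> omega⟩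
  have hcm : c ∈ seg V y x := by
    rw [mem_seg, pos_eq a x c, pos_eq a x y]
    exact ⟨hc, by split_ifs <;> omega⟩
  obtain ⟨x', hx'm, hx'max⟩ := Finset.exists_max_image (seg V x y) (pos y) ⟨a, ham⟩
  obtain ⟨y', hy'm, hy'max⟩ := Finset.exists_max_image (seg V y x) (pos x) ⟨c, hcm⟩
  have bX' := pos_lt a x'; have bY' := pos_lt a y'
  have key1 : pos a x' < pos a b := by
    have hax := hx'max a ham
    have hmm := (mem_seg.mp hx'm).2
    rw [pos_eq a y a, pos_eq a y x'] at hax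
    rw [pos_eq a y x', pos_eq a y x] at hmm
    split_ifs at hax hmm <;> omega
  have key2 : pos a c ≤ pos a y' ∧ pos a y' < pos a d := by
    have hcy := hy'max c hcm
    have hmm := (mem_seg.mp hy'm).2
    rw [pos_eq a x c, pos_eq a x y'] at hcy
    rw [pos_eq a x y', pos_eq a x y] at hmm
    split_ifs at hcy hmm <;> omega
  exact ⟨x', y', ⟨x, y, hxy, ⟨⟨a, ham⟩, ⟨c, hcm⟩⟩, hx'm, hx'max, hy'm, hy'max⟩,
    key1, n2, key2.1, key2.2⟩

lemma negCase_of_restrict (hb : b ∈ V) (hd : d ∈ V) (hcyc : Cyc4 a b c d)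
    (h : NegCase (restrictArcs V A) a b c d) : NegCase A a b c d := by
  obtain ⟨x', y', hmem, n1, n2, n3, n4⟩ := h
  obtain ⟨x, y, hxy, hsep, hx'm, hx'max, hy'm, hy'max⟩ := hmem
  dsimp only at hx'm hx'max hy'm hy'max
  obtain ⟨c1, c2, c3⟩ := hcyc
  have bX := pos_lt a x; have bY := pos_lt a y
  have bX' := pos_lt a x'; have bY' := pos_lt a y'
  have bB := pos_lt a b; have bC := pos_lt a c; have bD := pos_lt a d
  have hx's := (mem_seg.mp hx'm).2
  have hy's := (mem_seg.mp hy'm).2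
  have claim1 : pos a x < pos a b := by
    by_contra hcon
    have hbx : 0 < pos x' b ∧ pos x' b ≤ pos x' x := by
      rw [pos_eq a x' b, pos_eq a x' x]
      split_ifs <;> omega
    have hstep := cyc_step y x' x b hx's.1 hx's.2 hbx.1 hbx.2
    have := hx'max b (mem_seg.mpr ⟨hb, hstep.1, hstep.2.2⟩)
    omega
  have claim2 : pos a c ≤ pos a y ∧ pos a y < pos a d := by
    by_contra hcon
    have hdy : 0 < pos y' d ∧ pos y' d ≤ pos y' y := by
      rw [pos_eq a y' d, pos_eq a y' y]
      split_ifs <;> omega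
    have hstep := cyc_step x y' y d hy's.1 hy's.2 hdy.1 hdy.2
    have := hy'max d (mem_seg.mpr ⟨hd, hstep.1, hstep.2.2⟩)
    omega
  exact ⟨x, y, hxy, claim1, n2, claim2.1, claim2.2⟩

end Main

end CyclicTri

open CyclicTri in
/-- For a triangulation `T` of the `m`-gon and `V ⊆ [m]` with `|V| ≥ 4`, the
restriction of `χ_T` to 4-tuples from `V` equals `χ_{T_V}`. -/
theorem stmt_4 (m : ℕ) (hm : 4 ≤ m) [NeZero m] (A : Set (ZMod m × ZMod m))
    (hT : IsTriangulationOn (Finset.univ : Finset (ZMod m)) A)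
    (V : Finset (ZMod m)) (hV : 4 ≤ V.card)
    (a b c d : ZMod m) (ha : a ∈ V) (hb : b ∈ V) (hc : c ∈ V) (hd : d ∈ V)
    (h : Cyc4 a b c d) :
    chiCyc A a b c d = chiCyc (restrictArcs V A) a b c d := by
  have hp : PosCase A a b c d ↔ PosCase (restrictArcs V A) a b c d :=
    ⟨posCase_restrict hb hd, posCase_of_restrict ha hc⟩
  have hn : NegCase A a b c d ↔ NegCase (restrictArcs V A) a b c d :=
    ⟨negCase_restrict ha hc h, negCase_of_restrict hb hd h⟩
  simp only [chiCyc]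
  by_cases hP : PosCase A a b c d
  · rw [if_pos hP, if_pos (hp.mp hP)]
  · rw [if_neg hP, if_neg (fun hx => hP (hp.mpr hx))]
    by_cases hN : NegCase A a b c d
    · rw [if_pos hN, if_pos (hn.mp hN)]
    · rw [if_neg hN, if_neg (fun hx => hN (hn.mpr hx))]
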